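/- Every automorphism φ of the skeleton category _S𝒜⁰_Sk of finitely generated free left S-acts which is constant on the canonical injections, i.e. φ(μᵢ) = μᵢ for all canonical injections μᵢ : S → Fₙ (1 ≤ i ≤ n, n ∈ ℕ), is twisted: φ = φ^σ for some monoid automorphism σ of S. -/

import Mathlib

open CategoryTheory

/-- `f : S × X → S × Y` is a homomorphism of free left `S`-acts, where the action of
`S` on `S × X` is `s • (t, x) = (s * t, x)`. -/
def IsActHom (S : Type) [Monoid S] {X Y : Type} (f : S × X → S × Y) : Prop :=
  ∀ (s : S) (p : S × X), f (s * p.1, p.2) = (s * (f p).1, (f p).2)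

/-- The skeleton category `_S𝒜⁰_Sk` of finitely generated free left `S`-acts:
objects are natural numbers `n`, standing for the free act `Fₙ = S × Fin n`. -/
def SkFree (S : Type) [Monoid S] : Type := ℕ

/-- The category structure on `_S𝒜⁰_Sk`: morphisms `n ⟶ m` are the `S`-equivariant maps
`S × Fin n → S × Fin m`. -/
instance (S : Type) [Monoid S] : Category (SkFree S) where
  Hom n m := {f : S × Fin n → S × Fin m // IsActHom S f}
  id n := ⟨fun p => p, fun _ _ => rfl⟩
  comp f g := ⟨fun p => g.1 (f.1 p), fun s p => by
    show g.1 (f.1 (s * p.1, p.2)) = _; rw [f.2 s p]; exact g.2 s (f.1 p)⟩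

/-- An automorphism of a category `C`: a functor `C ⥤ C` admitting a functor `ψ` with
`φ ⋙ ψ` and `ψ ⋙ φ` equal (not merely isomorphic) to the identity functor. -/
def IsCatAutomorphism {C : Type*} [Category C] (φ : C ⥤ C) : Prop :=
  ∃ ψ : C ⥤ C, φ ⋙ ψ = 𝟭 C ∧ ψ ⋙ φ = 𝟭 C

/-- The object `Fₙ = S × Fin n` of the skeleton category. -/
def toSk (S : Type) [Monoid S] (n : ℕ) : SkFree S := n

/-- The twisted automorphism `φ^σ` associated to a monoid automorphism `σ` of `S`:
it fixes every object `Fₙ` and sends `f : Fₙ ⟶ Fₘ` to `σₘ ∘ f ∘ σₙ⁻¹`, where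
`σₙ : S × Fin n → S × Fin n` is the bijection `(t, i) ↦ (σ t, i)`. -/
def twistFunctor (S : Type) [Monoid S] (σ : S ≃* S) : SkFree S ⥤ SkFree S where
  obj n := n
  map {n m} f :=
    ⟨fun p => ((σ ((f.1 (σ.symm p.1, p.2)).1)), (f.1 (σ.symm p.1, p.2)).2), by
      intro s p
      have h := f.2 (σ.symm s) (σ.symm p.1, p.2)
      show ((σ ((f.1 (σ.symm (s * p.1), p.2)).1)), (f.1 (σ.symm (s * p.1), p.2)).2) = _
      rw [map_mul σ.symm s p.1, h]
      simp [map_mul]⟩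
  map_id n := Subtype.ext (funext fun p => by
    show (σ (σ.symm p.1), p.2) = p
    simp)
  map_comp {n m k} f g := Subtype.ext (funext fun p => by
    show (σ ((g.1 (f.1 (σ.symm p.1, p.2))).1), (g.1 (f.1 (σ.symm p.1, p.2))).2) =
        (σ ((g.1 (σ.symm (σ ((f.1 (σ.symm p.1, p.2)).1)), (f.1 (σ.symm p.1, p.2)).2)).1),
          (g.1 (σ.symm (σ ((f.1 (σ.symm p.1, p.2)).1)), (f.1 (σ.symm p.1, p.2)).2)).2)
    simp)

/-- The canonical injection `μᵢ : S = F₁ ⟶ Fₙ`, `t ↦ (t, i)`. -/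
def inj (S : Type) [Monoid S] (n : ℕ) (i : Fin n) : toSk S 1 ⟶ toSk S n :=
  ⟨fun p => (p.1, i), fun _ _ => rfl⟩

section Aux

open CategoryTheory

variable {S : Type} [Monoid S]

namespace SkAux

lemma hom_ext {n m : ℕ} {g h : toSk S n ⟶ toSk S m}
    (H : ∀ i : Fin n, g.1 (1, i) = h.1 (1, i)) : g = h := by
  apply Subtype.ext
  funext p
  have hg := g.2 p.1 (1, p.2)
  have hh := h.2 p.1 (1, p.2)
  rw [mul_one] at hg hh
  show g.1 (p.1, p.2) = h.1 (p.1, p.2)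
  rw [hg, hh, H p.2]

/-- right translation endomorphism of `F₁`. -/
def endT (t : S) : toSk S 1 ⟶ toSk S 1 :=
  ⟨fun p => (p.1 * t, p.2), fun s p => by
    show ((s * p.1) * t, p.2) = (s * (p.1 * t), p.2)
    rw [mul_assoc]⟩

lemma endT_comp (t u : S) : endT t ≫ endT u = endT (t * u) := by
  apply Subtype.ext; funext p
  show ((p.1 * t) * u, p.2) = (p.1 * (t * u), p.2)
  rw [mul_assoc]

lemma endT_one : endT (1 : S) = 𝟙 (toSk S 1) := by
  apply Subtype.ext; funext p
  show (p.1 * 1, p.2) = p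
  rw [mul_one]

lemma endT_injective : Function.Injective (endT (S := S)) := by
  intro t u h
  have h2 : (1 : S) * t = 1 * u := congrArg (fun f => (f.1 (1, (0 : Fin 1))).1) h
  rwa [one_mul, one_mul] at h2

lemma end_eq (g : toSk S 1 ⟶ toSk S 1) : g = endT ((g.1 (1, (0 : Fin 1))).1) := by
  apply hom_ext (n := 1) (m := 1)
  intro i
  have hi : i = 0 := Subsingleton.elim _ _
  subst hi
  show g.1 (1, (0 : Fin 1)) = ((1 : S) * (g.1 (1, (0 : Fin 1))).1, (0 : Fin 1))
  rw [one_mul]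
  exact Prod.ext rfl (@Subsingleton.elim _ (inferInstanceAs (Subsingleton (Fin 1))) _ _)

lemma inj_comp {n m : ℕ} (f : toSk S n ⟶ toSk S m) (i : Fin n) :
    inj S n i ≫ f = endT ((f.1 (1, i)).1) ≫ inj S m ((f.1 (1, i)).2) := by
  apply Subtype.ext; funext p
  show f.1 (p.1, i) = (p.1 * (f.1 (1, i)).1, (f.1 (1, i)).2)
  have := f.2 p.1 (1, i)
  rw [mul_one] at this
  exact this

lemma eq_zero_of_hom {q : ℕ} (f : toSk S q ⟶ toSk S 0) : q = 0 := by
  by_contra h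
  exact (f.1 (1, ⟨0, Nat.pos_of_ne_zero h⟩)).2.elim0

def fromZero (n : ℕ) : toSk S 0 ⟶ toSk S n :=
  ⟨fun p => p.2.elim0, fun s p => p.2.elim0⟩

lemma exists_epi_iff (q n : ℕ) :
    (∃ f : toSk S q ⟶ toSk S n, Epi f) ↔ (q = 0 ∧ n = 0) ∨ (1 ≤ n ∧ n ≤ q) := by
  constructor
  · rintro ⟨f, hf⟩
    rcases Nat.eq_zero_or_pos n with hn | hn
    · subst hn; exact Or.inl ⟨eq_zero_of_hom f, rfl⟩
    · refine Or.inr ⟨hn, ?_⟩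
      by_contra hqn
      push_neg at hqn
      have hsurj : ¬ Function.Surjective (fun l : Fin q => (f.1 (1, l)).2) := by
        intro hs
        have := Fintype.card_le_of_surjective (α := Fin q) (β := Fin n) _ hs
        simp only [Fintype.card_fin] at this
        have hle : n ≤ q := this
        omega
      obtain ⟨i₀, hi₀⟩ := not_forall.mp hsurj
      haveI : DecidableEq (Fin (toSk S n)) := instDecidableEqFin n
      set g : toSk S n ⟶ toSk S (n + 1) := ⟨fun p => (p.1, p.2.castSucc), fun s p => rfl⟩ with hg
      set h : toSk S n ⟶ toSk S (n + 1) :=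
        ⟨fun p => (p.1, if p.2 = i₀ then Fin.last n else p.2.castSucc), fun s p => rfl⟩ with hh
      have hcomp : f ≫ g = f ≫ h := by
        apply Subtype.ext; funext p
        show g.1 (f.1 p) = h.1 (f.1 p)
        have hp := f.2 p.1 (1, p.2)
        rw [mul_one] at hp
        have hne : (f.1 p).2 ≠ i₀ := by
          show (f.1 (p.1, p.2)).2 ≠ i₀
          rw [hp]
          intro hc
          exact hi₀ ⟨p.2, hc⟩
        rw [hg, hh]
        exact Prod.ext rfl (if_neg hne).symm
      haveI := hf
      have : g = h := (cancel_epi f).mp hcomp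
      have := congrArg (fun k => (k.1 ((1 : S), i₀)).2) this
      simp only [hg, hh, if_pos rfl] at this
      exact absurd this (Fin.ne_of_lt (Fin.castSucc_lt_last i₀))
  · rintro (⟨hq, hn⟩ | ⟨hn, hnq⟩)
    · subst hq; subst hn; exact ⟨𝟙 _, inferInstance⟩
    · refine ⟨⟨fun p => (p.1, ⟨p.2.1 % n, Nat.mod_lt _ hn⟩), fun s p => rfl⟩, ?_⟩
      constructor
      intro Z g h w
      apply hom_ext (n := n) (m := Z)
      intro i
      have := congrArg (fun k => k.1 ((1 : S), (⟨i.1, lt_of_lt_of_le i.2 hnq⟩ : Fin q))) w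
      have hmod : (⟨i.1 % n, Nat.mod_lt _ hn⟩ : Fin n) = i := Fin.ext (Nat.mod_eq_of_lt i.2)
      show g.1 (1, i) = h.1 (1, i)
      rw [← hmod]
      exact this

end SkAux

end Aux

section Aux2

open CategoryTheory

variable {S : Type} [Monoid S]

namespace SkAux

lemma hom_heq_eq {C : Type*} [Category C] {A B A' B' : C} (hA : A = A') (hB : B = B')
    {x : A ⟶ B} {y : A' ⟶ B'} (h : HEq x y) :
    x = eqToHom hA ≫ y ≫ eqToHom hB.symm := by
  subst hA; subst hB
  rw [eq_of_heq h]; simp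

section Functors

variable {φ ψ : SkFree S ⥤ SkFree S}

lemma psi_phi_obj (h1 : φ ⋙ ψ = 𝟭 (SkFree S)) (X : SkFree S) : ψ.obj (φ.obj X) = X := by
  have := Functor.congr_obj h1 X
  simpa using this

lemma obj_injective (h1 : φ ⋙ ψ = 𝟭 (SkFree S)) : Function.Injective φ.obj := by
  intro x y hxy
  have hx := psi_phi_obj h1 x
  have hy := psi_phi_obj h1 y
  rw [← hx, ← hy, hxy]

lemma map_epi (h1 : φ ⋙ ψ = 𝟭 (SkFree S)) (h2 : ψ ⋙ φ = 𝟭 (SkFree S)) {n m : SkFree S}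
    (f : n ⟶ m) (hf : Epi f) : Epi (φ.map f) := by
  constructor
  intro Z g h w
  have hf1 := Functor.congr_hom h1 f
  simp only [Functor.comp_map, Functor.id_map] at hf1
  have w2 : ψ.map (φ.map f) ≫ ψ.map g = ψ.map (φ.map f) ≫ ψ.map h := by
    rw [← Functor.map_comp, ← Functor.map_comp, w]
  rw [hf1] at w2
  have w2' := congrArg (fun z => eqToHom (Functor.congr_obj h1 n).symm ≫ z) w2
  simp only [Category.assoc, eqToHom_trans_assoc, eqToHom_refl, Category.id_comp] at w2'
  have w2'' := hf.left_cancellation _ _ w2'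
  have w2''' := congrArg (fun z => eqToHom (Functor.congr_obj h1 m) ≫ z) w2''
  simp only [eqToHom_trans_assoc, eqToHom_refl, Category.id_comp] at w2'''
  -- w2''' : ψ.map g = ψ.map h
  have w3 := congrArg φ.map w2'''
  have hg := Functor.congr_hom h2 g
  have hh := Functor.congr_hom h2 h
  simp only [Functor.comp_map, Functor.id_map] at hg hh
  rw [hg, hh] at w3
  have w4 := congrArg
    (fun z => eqToHom (Functor.congr_obj h2 (φ.obj m)).symm ≫ z ≫ eqToHom (Functor.congr_obj h2 Z)) w3
  simp only [Category.assoc, eqToHom_trans, eqToHom_trans_assoc, eqToHom_refl,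
    Category.id_comp, Category.comp_id] at w4
  exact w4

lemma obj_zero (h1 : φ ⋙ ψ = 𝟭 (SkFree S)) (h2 : ψ ⋙ φ = 𝟭 (SkFree S)) :
    φ.obj (toSk S 0) = toSk S 0 := by
  have e : ψ.obj (φ.obj (toSk S 0)) = toSk S 0 := psi_phi_obj h1 _
  have m0 : toSk S (ψ.obj (toSk S 0)) ⟶ toSk S 0 :=
    ψ.map (fromZero (φ.obj (toSk S 0))) ≫ eqToHom e
  have hq := eq_zero_of_hom m0
  have h3 := psi_phi_obj h2 (toSk S 0)
  rw [hq] at h3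
  exact h3

lemma obj_le (h1 : φ ⋙ ψ = 𝟭 (SkFree S)) (h2 : ψ ⋙ φ = 𝟭 (SkFree S)) (n : ℕ) :
    n ≤ (φ.obj (toSk S n) : ℕ) := by
  set A : ℕ → ℕ := fun k => (φ.obj (toSk S k) : ℕ) with hA
  show n ≤ A n
  have hmono : Monotone A := by
    intro x y hxy
    rcases Nat.eq_zero_or_pos x with hx | hx
    · subst hx
      have h0 : A 0 = 0 := obj_zero h1 h2
      rw [h0]
      exact Nat.zero_le _
    · obtain ⟨f, hf⟩ := (exists_epi_iff (S := S) y x).mpr (Or.inr ⟨hx, hxy⟩)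
      have hepi : Epi (φ.map f) := map_epi h1 h2 f hf
      have hex : ∃ g : toSk S (A y) ⟶ toSk S (A x), Epi g := ⟨φ.map f, hepi⟩
      rcases (exists_epi_iff _ _).mp hex with ⟨ha, hb⟩ | ⟨ha, hb⟩
      · rw [ha, hb]
      · exact hb
  have hinj : Function.Injective A := by
    intro x y hxy
    exact obj_injective h1 hxy
  exact (hmono.strictMono_of_injective hinj).le_apply

lemma obj_fix (h1 : φ ⋙ ψ = 𝟭 (SkFree S)) (h2 : ψ ⋙ φ = 𝟭 (SkFree S)) (X : SkFree S) :
    φ.obj X = X := by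
  have ha : Nat.le X (φ.obj (toSk S X)) := obj_le h1 h2 X
  have hb : Nat.le (φ.obj (toSk S X)) (ψ.obj (toSk S (φ.obj (toSk S X)))) :=
    obj_le h2 h1 _
  have h3 : ψ.obj (toSk S (φ.obj (toSk S X))) = X := psi_phi_obj h1 X
  rw [h3] at hb
  exact Nat.le_antisymm hb ha

end Functors

end SkAux

end Aux2

section Aux3

open CategoryTheory

variable {S : Type} [Monoid S]

namespace SkAux

/-- The conjugated action of `φ` on hom-sets, once we know `φ` fixes all objects. -/
def Phi (φ : SkFree S ⥤ SkFree S) (hobj : ∀ X : SkFree S, φ.obj X = X)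
    {n m : SkFree S} (f : n ⟶ m) : n ⟶ m :=
  eqToHom (hobj n).symm ≫ φ.map f ≫ eqToHom (hobj m)

lemma Phi_comp (φ : SkFree S ⥤ SkFree S) (hobj : ∀ X : SkFree S, φ.obj X = X)
    {n m k : SkFree S} (f : n ⟶ m) (g : m ⟶ k) :
    Phi φ hobj (f ≫ g) = Phi φ hobj f ≫ Phi φ hobj g := by
  simp [Phi]

lemma Phi_inj (φ : SkFree S ⥤ SkFree S) (hobj : ∀ X : SkFree S, φ.obj X = X)
    (n : ℕ) (i : Fin n) (hμ : HEq (φ.map (inj S n i)) (inj S n i)) :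
    Phi φ hobj (inj S n i) = inj S n i := by
  have h := hom_heq_eq (hobj (toSk S 1)) (hobj (toSk S n)) hμ
  rw [Phi, h]
  simp

lemma Phi_Phi {φ ψ : SkFree S ⥤ SkFree S} (h1 : φ ⋙ ψ = 𝟭 (SkFree S))
    (hobj : ∀ X : SkFree S, φ.obj X = X) (hobjψ : ∀ X : SkFree S, ψ.obj X = X)
    {n m : SkFree S} (f : n ⟶ m) :
    Phi ψ hobjψ (Phi φ hobj f) = f := by
  have hf1 := Functor.congr_hom h1 f
  simp only [Functor.comp_map, Functor.id_map] at hf1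
  simp [Phi, Functor.map_comp, eqToHom_map, hf1]

end SkAux

end Aux3


/-- Every automorphism `φ` of the skeleton category `_S𝒜⁰_Sk` which is
constant on the canonical injections, i.e. `φ(μᵢ) = μᵢ` for all `μᵢ : S ⟶ Fₙ`, is twisted:
`φ = φ^σ` for some monoid automorphism `σ` of `S`. -/
theorem automorphism_constant_on_injections_is_twisted (S : Type) [Monoid S]
    (φ : SkFree S ⥤ SkFree S) (hφ : IsCatAutomorphism φ)
    (hμ : ∀ (n : ℕ) (i : Fin n), HEq (φ.map (inj S n i)) (inj S n i)) :
    ∃ σ : S ≃* S, φ = twistFunctor S σ := by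
  obtain ⟨ψ, h1, h2⟩ := hφ
  have hobj : ∀ X : SkFree S, φ.obj X = X := SkAux.obj_fix h1 h2
  have hobjψ : ∀ X : SkFree S, ψ.obj X = X := SkAux.obj_fix h2 h1
  set σf : S → S := fun t => ((SkAux.Phi φ hobj (SkAux.endT t)).1 (1, (0 : Fin 1))).1 with hσf
  set τf : S → S := fun t => ((SkAux.Phi ψ hobjψ (SkAux.endT t)).1 (1, (0 : Fin 1))).1 with hτf
  have hσ : ∀ t, SkAux.Phi φ hobj (SkAux.endT t) = SkAux.endT (σf t) := fun t =>
    SkAux.end_eq _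
  have hτ : ∀ t, SkAux.Phi ψ hobjψ (SkAux.endT t) = SkAux.endT (τf t) := fun t =>
    SkAux.end_eq _
  have hτσ : Function.LeftInverse τf σf := by
    intro t
    apply SkAux.endT_injective
    calc SkAux.endT (τf (σf t)) = SkAux.Phi ψ hobjψ (SkAux.endT (σf t)) := (hτ _).symm
      _ = SkAux.Phi ψ hobjψ (SkAux.Phi φ hobj (SkAux.endT t)) := by rw [hσ]
      _ = SkAux.endT t := SkAux.Phi_Phi h1 hobj hobjψ _
  have hστ : Function.RightInverse τf σf := by
    intro t
    apply SkAux.endT_injective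
    calc SkAux.endT (σf (τf t)) = SkAux.Phi φ hobj (SkAux.endT (τf t)) := (hσ _).symm
      _ = SkAux.Phi φ hobj (SkAux.Phi ψ hobjψ (SkAux.endT t)) := by rw [hτ]
      _ = SkAux.endT t := SkAux.Phi_Phi h2 hobjψ hobj _
  have hmul : ∀ t u : S, σf (t * u) = σf t * σf u := by
    intro t u
    apply SkAux.endT_injective
    calc SkAux.endT (σf (t * u)) = SkAux.Phi φ hobj (SkAux.endT (t * u)) := (hσ _).symm
      _ = SkAux.Phi φ hobj (SkAux.endT t ≫ SkAux.endT u) := by rw [SkAux.endT_comp]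
      _ = SkAux.Phi φ hobj (SkAux.endT t) ≫ SkAux.Phi φ hobj (SkAux.endT u) :=
          SkAux.Phi_comp φ hobj _ _
      _ = SkAux.endT (σf t) ≫ SkAux.endT (σf u) := by rw [hσ, hσ]
      _ = SkAux.endT (σf t * σf u) := SkAux.endT_comp _ _
  refine ⟨⟨⟨σf, τf, hτσ, hστ⟩, hmul⟩, ?_⟩
  set σ : S ≃* S := ⟨⟨σf, τf, hτσ, hστ⟩, hmul⟩ with hσdef
  refine CategoryTheory.Functor.ext (fun X => hobj X) ?_
  intro X Y f
  have hkey : SkAux.Phi φ hobj f = (twistFunctor S σ).map f := by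
    apply SkAux.hom_ext (n := X) (m := Y)
    intro i
    have hrel := SkAux.inj_comp f i
    have hrel2 := (SkAux.Phi_comp φ hobj (inj S X i) f).symm.trans ((congrArg (SkAux.Phi φ hobj) hrel).trans
      (SkAux.Phi_comp φ hobj (SkAux.endT (f.1 (1, i)).1) (inj S Y (f.1 (1, i)).2)))
    rw [SkAux.Phi_inj φ hobj X i (hμ X i),
      SkAux.Phi_inj φ hobj Y _ (hμ Y _), hσ] at hrel2
    have hval : (SkAux.Phi φ hobj f).1 (1, i)
        = ((1 : S) * σf ((f.1 (1, i)).1), (f.1 (1, i)).2) :=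
      congrArg (fun k => k.1 ((1 : S), (0 : Fin 1))) hrel2
    have hone : σ.symm (1 : S) = 1 := map_one σ.symm
    show (SkAux.Phi φ hobj f).1 (1, i)
        = (σ ((f.1 (σ.symm 1, i)).1), (f.1 (σ.symm 1, i)).2)
    rw [hone, hval, one_mul]
    rfl
  rw [← hkey]
  change φ.map f = eqToHom (hobj X) ≫ (eqToHom (hobj X).symm ≫ φ.map f ≫ eqToHom (hobj Y)) ≫
    eqToHom (hobj Y).symm
  simp
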